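/- For integers k ≥ 0 and n ≥ 1, the integral over the unit cube [0,1]ⁿ of (t₁ + ⋯ + tₙ)^k with respect to dt₁⋯dtₙ equals S(k+n, n) / C(k+n, n), where S denotes the Stirling number of the second kind and C the binomial coefficient. -/

import Mathlib

open MeasureTheory

/-- The Stirling number of the second kind, via its explicit formula, as a real number. -/
noncomputable def stirling2 (m j : ℕ) : ℝ :=
  (1 / (j.factorial : ℝ)) *
    ∑ i ∈ Finset.range (j + 1), (-1 : ℝ) ^ (j - i) * (j.choose i : ℝ) * (i : ℝ) ^ m

lemma pi_restrict_Icc (n : ℕ) :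
    (volume : Measure (Fin n → ℝ)).restrict (Set.univ.pi fun _ => Set.Icc (0 : ℝ) 1) =
      Measure.pi (fun _ : Fin n => volume.restrict (Set.Icc (0 : ℝ) 1)) := by
  refine (Measure.pi_eq fun s hs => ?_).symm
  rw [Measure.restrict_apply (MeasurableSet.univ_pi hs)]
  rw [← Set.pi_inter_distrib, volume_pi, Measure.pi_pi]
  exact Finset.prod_congr rfl fun i _ => (Measure.restrict_apply (hs i)).symm

lemma claimA (n : ℕ) (x : ℕ → ℝ) :
    ∑ i ∈ Finset.range (n + 2), (-1 : ℝ) ^ i * ((n + 1).choose i : ℝ) * x i =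
      ∑ i ∈ Finset.range (n + 1), (-1 : ℝ) ^ i * (n.choose i : ℝ) * x i -
        ∑ i ∈ Finset.range (n + 1), (-1 : ℝ) ^ i * (n.choose i : ℝ) * x (i + 1) := by
  rw [Finset.sum_range_succ' (fun i => (-1 : ℝ) ^ i * ((n + 1).choose i : ℝ) * x i) (n + 1)]
  have h : ∀ i ∈ Finset.range (n + 1),
      (-1 : ℝ) ^ (i + 1) * ((n + 1).choose (i + 1) : ℝ) * x (i + 1) =
        -((-1 : ℝ) ^ i * (n.choose i : ℝ) * x (i + 1)) +
          (-1 : ℝ) ^ (i + 1) * (n.choose (i + 1) : ℝ) * x (i + 1) := by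
    intro i _
    rw [Nat.choose_succ_succ]
    push_cast
    ring
  rw [Finset.sum_congr rfl h, Finset.sum_add_distrib, Finset.sum_neg_distrib]
  have h2 : ∑ i ∈ Finset.range (n + 1), (-1 : ℝ) ^ (i + 1) * (n.choose (i + 1) : ℝ) * x (i + 1) =
      ∑ i ∈ Finset.range (n + 2), (-1 : ℝ) ^ i * (n.choose i : ℝ) * x i - x 0 := by
    rw [Finset.sum_range_succ' (fun i => (-1 : ℝ) ^ i * (n.choose i : ℝ) * x i) (n + 1)]
    simp
  have h3 : ∑ i ∈ Finset.range (n + 2), (-1 : ℝ) ^ i * (n.choose i : ℝ) * x i =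
      ∑ i ∈ Finset.range (n + 1), (-1 : ℝ) ^ i * (n.choose i : ℝ) * x i := by
    rw [Finset.sum_range_succ]
    simp [Nat.choose_succ_self]
  rw [h2, h3]
  simp
  ring

lemma cont_aux (n : ℕ) (c : ℝ) (k : ℕ) :
    Continuous fun t : Fin n → ℝ => (c + ∑ i, t i) ^ k :=
  (continuous_const.add (continuous_finset_sum _ fun i _ => continuous_apply i)).pow k

lemma integrable_aux (n : ℕ) (c : ℝ) (k : ℕ) :
    Integrable (fun t : Fin n → ℝ => (c + ∑ i, t i) ^ k)
      (Measure.pi fun _ : Fin n => volume.restrict (Set.Icc (0 : ℝ) 1)) := by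
  rw [← pi_restrict_Icc]
  exact (cont_aux n c k).continuousOn.integrableOn_compact
    (isCompact_univ_pi fun _ => isCompact_Icc)

lemma one_dim (c : ℝ) (m : ℕ) :
    (∫ x, (c + x) ^ m ∂(volume.restrict (Set.Icc (0 : ℝ) 1))) =
      ((c + 1) ^ (m + 1) - c ^ (m + 1)) / (m + 1) := by
  have h1 : (∫ x, (c + x) ^ m ∂(volume.restrict (Set.Icc (0 : ℝ) 1))) =
      ∫ x in (0 : ℝ)..1, (c + x) ^ m := by
    rw [intervalIntegral.integral_of_le zero_le_one]
    exact (MeasureTheory.integral_Icc_eq_integral_Ioc (f := fun x => (c + x) ^ m))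
  rw [h1]
  have h2 : ∀ x : ℝ, (c + x) ^ m = (x + c) ^ m := fun x => by ring_nf
  simp_rw [h2]
  rw [intervalIntegral.integral_comp_add_right (fun x => x ^ m) c, integral_pow]
  ring_nf

lemma key (n : ℕ) : ∀ (k : ℕ) (c : ℝ),
    (∫ t, (c + ∑ i, t i) ^ k
        ∂(Measure.pi fun _ : Fin n => volume.restrict (Set.Icc (0 : ℝ) 1))) =
      ((k.factorial : ℝ) / ((k + n).factorial : ℝ)) * (-1 : ℝ) ^ n *
        ∑ i ∈ Finset.range (n + 1), (-1 : ℝ) ^ i * (n.choose i : ℝ) * (c + i) ^ (k + n) := by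
  induction n with
  | zero =>
    intro k c
    rw [Measure.pi_of_empty (fun _ : Fin 0 => volume.restrict (Set.Icc (0 : ℝ) 1))]
    simp
    rw [div_self (Nat.cast_ne_zero.mpr (Nat.factorial_ne_zero k)), one_mul]
  | succ n ih =>
    intro k c
    have hmp := (measurePreserving_piFinSuccAbove
      (fun _ : Fin (n + 1) => volume.restrict (Set.Icc (0 : ℝ) 1)) 0).symm
    set e := (MeasurableEquiv.piFinSuccAbove (fun _ : Fin (n + 1) => ℝ) 0).symm with he
    have hcomp : ∀ p : ℝ × (Fin n → ℝ),
        (c + ∑ i, e p i) ^ k = ((c + p.1) + ∑ i, p.2 i) ^ k := by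
      intro p
      have : (∑ i, e p i) = p.1 + ∑ i, p.2 i := by
        simp only [he, MeasurableEquiv.piFinSuccAbove_symm_apply, Fin.insertNthEquiv,
          Equiv.coe_fn_mk, Fin.insertNth_zero, cast_eq, Fin.sum_cons]
      rw [this]; ring_nf
    have step1 : (∫ t, (c + ∑ i, t i) ^ k
        ∂(Measure.pi fun _ : Fin (n + 1) => volume.restrict (Set.Icc (0 : ℝ) 1))) =
        ∫ p, ((c + p.1) + ∑ i, p.2 i) ^ k
          ∂((volume.restrict (Set.Icc (0 : ℝ) 1)).prod
            (Measure.pi fun _ : Fin n => volume.restrict (Set.Icc (0 : ℝ) 1))) := by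
      rw [← hmp.integral_comp (MeasurableEquiv.measurableEmbedding _)
        (fun t => (c + ∑ i, t i) ^ k)]
      exact integral_congr_ae (Filter.Eventually.of_forall fun p => hcomp p)
    have hint : Integrable (fun p : ℝ × (Fin n → ℝ) => ((c + p.1) + ∑ i, p.2 i) ^ k)
        ((volume.restrict (Set.Icc (0 : ℝ) 1)).prod
          (Measure.pi fun _ : Fin n => volume.restrict (Set.Icc (0 : ℝ) 1))) := by
      have := (hmp.integrable_comp_emb (MeasurableEquiv.measurableEmbedding _)
        (g := fun t : Fin (n + 1) → ℝ => (c + ∑ i, t i) ^ k)).2 (integrable_aux (n + 1) c k)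
      exact this.congr (Filter.Eventually.of_forall fun p => hcomp p)
    rw [step1, MeasureTheory.integral_prod _ hint]
    have inner : ∀ x : ℝ,
        (∫ y, ((c + x) + ∑ i, y i) ^ k
          ∂(Measure.pi fun _ : Fin n => volume.restrict (Set.Icc (0 : ℝ) 1))) =
        ((k.factorial : ℝ) / ((k + n).factorial : ℝ)) * (-1 : ℝ) ^ n *
          ∑ i ∈ Finset.range (n + 1), (-1 : ℝ) ^ i * (n.choose i : ℝ) *
            ((c + x) + i) ^ (k + n) := fun x => ih k (c + x)
    simp_rw [inner]
    rw [MeasureTheory.integral_const_mul]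
    have hswap : (∫ x, (∑ i ∈ Finset.range (n + 1), (-1 : ℝ) ^ i * (n.choose i : ℝ) *
          ((c + x) + i) ^ (k + n)) ∂(volume.restrict (Set.Icc (0 : ℝ) 1))) =
        ∑ i ∈ Finset.range (n + 1), (-1 : ℝ) ^ i * (n.choose i : ℝ) *
          (((c + i) + 1) ^ (k + n + 1) - (c + i) ^ (k + n + 1)) / (k + n + 1) := by
      rw [MeasureTheory.integral_finset_sum]
      · refine Finset.sum_congr rfl fun i _ => ?_
        rw [MeasureTheory.integral_const_mul]
        have : ∀ x : ℝ, ((c + x) + (i : ℝ)) ^ (k + n) = ((c + i) + x) ^ (k + n) := fun x => by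
          ring_nf
        simp_rw [this, one_dim (c + i) (k + n)]
        push_cast
        ring
      · intro i _
        apply Integrable.const_mul
        have : Continuous fun x : ℝ => ((c + x) + (i : ℝ)) ^ (k + n) := by continuity
        exact this.continuousOn.integrableOn_compact isCompact_Icc
    rw [hswap]
    have hA := claimA n (fun j => (c + j) ^ (k + n + 1))
    have hfac : ((k + (n + 1)).factorial : ℝ) = ((k + n).factorial : ℝ) * ((k + n : ℕ) + 1) := by
      have h : k + (n + 1) = (k + n) + 1 := by ring
      rw [h, Nat.factorial_succ]
      push_cast
      ring
    have hsum : ∑ i ∈ Finset.range (n + 1), (-1 : ℝ) ^ i * (n.choose i : ℝ) *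
          (((c + i) + 1) ^ (k + n + 1) - (c + i) ^ (k + n + 1)) / (k + n + 1) =
        (-1 / ((k : ℝ) + n + 1)) * ∑ i ∈ Finset.range (n + 2),
          (-1 : ℝ) ^ i * ((n + 1).choose i : ℝ) * (c + i) ^ (k + n + 1) := by
      rw [hA]
      have h4 : ∀ i ∈ Finset.range (n + 1),
          (-1 : ℝ) ^ i * (n.choose i : ℝ) *
            (((c + i) + 1) ^ (k + n + 1) - (c + i) ^ (k + n + 1)) / (k + n + 1) =
          ((-1 : ℝ) ^ i * (n.choose i : ℝ) * (c + ((i : ℕ) + 1 : ℕ)) ^ (k + n + 1)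
            - (-1 : ℝ) ^ i * (n.choose i : ℝ) * (c + i) ^ (k + n + 1)) / ((k : ℝ) + n + 1) := by
        intro i _
        push_cast
        ring
      rw [Finset.sum_congr rfl h4, ← Finset.sum_div, Finset.sum_sub_distrib]
      field_simp
      ring
    rw [hsum]
    have hexp : k + (n + 1) = k + n + 1 := by ring
    rw [hexp]
    have hfac' : (((k + n + 1).factorial : ℕ) : ℝ) =
        ((k + n).factorial : ℝ) * ((k : ℝ) + n + 1) := by
      rw [Nat.factorial_succ]
      push_cast
      ring
    rw [hfac']
    have h1 : ((k + n).factorial : ℝ) ≠ 0 := Nat.cast_ne_zero.mpr (Nat.factorial_ne_zero _)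
    have h2 : ((k : ℝ) + n + 1) ≠ 0 := by positivity
    field_simp
    ring

theorem stmt_19 (k n : ℕ) (hn : 1 ≤ n) :
    ∫ t in (Set.univ.pi fun _ : Fin n => Set.Icc (0 : ℝ) 1), (∑ i, t i) ^ k =
      stirling2 (k + n) n / ((k + n).choose n : ℝ) := by
  have h := key n k 0
  simp_rw [zero_add] at h
  rw [pi_restrict_Icc, h]
  unfold stirling2
  have hchoose : ((k + n).choose n : ℝ) =
      ((k + n).factorial : ℝ) / ((n.factorial : ℝ) * (k.factorial : ℝ)) := by
    rw [Nat.cast_choose ℝ (Nat.le_add_left n k)]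
    congr 2
    simp [Nat.add_sub_cancel]
  have hsgn : ∀ i ∈ Finset.range (n + 1),
      (-1 : ℝ) ^ (n - i) * (n.choose i : ℝ) * (i : ℝ) ^ (k + n) =
        (-1 : ℝ) ^ n * ((-1 : ℝ) ^ i * (n.choose i : ℝ) * (i : ℝ) ^ (k + n)) := by
    intro i hi
    have hin : i ≤ n := Nat.lt_succ_iff.mp (Finset.mem_range.mp hi)
    have hpm : (-1 : ℝ) ^ (n - i) = (-1 : ℝ) ^ n * (-1 : ℝ) ^ i := by
      conv_rhs => rw [← Nat.sub_add_cancel hin, pow_add, mul_assoc, ← mul_pow]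
      norm_num
    rw [hpm]; ring
  rw [Finset.sum_congr rfl hsgn, ← Finset.mul_sum, hchoose]
  have h1 : ((k + n).factorial : ℝ) ≠ 0 := Nat.cast_ne_zero.mpr (Nat.factorial_ne_zero _)
  have h2 : (n.factorial : ℝ) ≠ 0 := Nat.cast_ne_zero.mpr (Nat.factorial_ne_zero _)
  have h3 : (k.factorial : ℝ) ≠ 0 := Nat.cast_ne_zero.mpr (Nat.factorial_ne_zero _)
  field_simp
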